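/- Let Θ₁ > 0, α_∞ > 0, let λ be a nonzero finite positive Borel measure on ℝ supported in [0, Θ₁], let a ≥ 0 and let σ be a finite positive Borel measure supported in [0, Θ₁] such that for all real s > 0, α_∞ / ( s · ∫ dλ(Θ)/(1 + sΘ) ) = a/s + ∫ dσ(Θ)/(1 + sΘ). Then a = α_∞ / λ(ℝ), i.e., the strength of the pole at s = 0 equals α_∞ divided by the total mass μ₀(λ) of λ. -/

import Mathlib

open MeasureTheory

lemma stmt12_aux (Θ₁ s : ℝ) (hΘ₁ : 0 < Θ₁) (hs : 0 < s)
    (μ : Measure ℝ) [IsFiniteMeasure μ] (hsupp : μ (Set.Icc 0 Θ₁)ᶜ = 0) :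
    Integrable (fun Θ : ℝ => (1 + s * Θ)⁻¹) μ ∧
    (1 + s * Θ₁)⁻¹ * (μ Set.univ).toReal ≤ ∫ Θ : ℝ, (1 + s * Θ)⁻¹ ∂μ ∧
    (∫ Θ : ℝ, (1 + s * Θ)⁻¹ ∂μ) ≤ (μ Set.univ).toReal := by
  have hae : ∀ᵐ Θ ∂μ, Θ ∈ Set.Icc 0 Θ₁ := by
    rw [ae_iff]
    exact hsupp
  have hmeas : AEStronglyMeasurable (fun Θ : ℝ => (1 + s * Θ)⁻¹) μ :=
    ((measurable_const.add (measurable_id.const_mul s)).inv).aestronglyMeasurable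
  have hpt : ∀ Θ ∈ Set.Icc 0 Θ₁,
      (1 + s * Θ₁)⁻¹ ≤ (1 + s * Θ)⁻¹ ∧ (1 + s * Θ)⁻¹ ≤ 1 := by
    intro Θ hΘ
    obtain ⟨h0, h1⟩ := hΘ
    have hp : (0:ℝ) < 1 + s * Θ := by nlinarith
    constructor
    · apply inv_anti₀ hp
      nlinarith
    · rw [inv_le_one_iff₀]; right; nlinarith
  have hint : Integrable (fun Θ : ℝ => (1 + s * Θ)⁻¹) μ := by
    refine Integrable.mono' (integrable_const 1) hmeas ?_
    filter_upwards [hae] with Θ hΘ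
    have hp : (0:ℝ) < 1 + s * Θ := by
      obtain ⟨h0, h1⟩ := hΘ; nlinarith
    rw [Real.norm_eq_abs, abs_of_pos (inv_pos.mpr hp)]
    exact (hpt Θ hΘ).2
  refine ⟨hint, ?_, ?_⟩
  · calc (1 + s * Θ₁)⁻¹ * (μ Set.univ).toReal
        = ∫ _ : ℝ, (1 + s * Θ₁)⁻¹ ∂μ := by
          rw [integral_const, smul_eq_mul, mul_comm]; rfl
      _ ≤ ∫ Θ : ℝ, (1 + s * Θ)⁻¹ ∂μ := by
          refine integral_mono_ae (integrable_const _) hint ?_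
          filter_upwards [hae] with Θ hΘ
          exact (hpt Θ hΘ).1
  · calc (∫ Θ : ℝ, (1 + s * Θ)⁻¹ ∂μ) ≤ ∫ _ : ℝ, (1:ℝ) ∂μ := by
          refine integral_mono_ae hint (integrable_const _) ?_
          filter_upwards [hae] with Θ hΘ
          exact (hpt Θ hΘ).2
      _ = (μ Set.univ).toReal := by rw [integral_const, smul_eq_mul, mul_one]; rfl

/-- In the integral representation of the dynamic tortuosity, the strength of
the pole at s = 0 equals α_∞ divided by the total mass of λ. -/
theorem stmt12 (Θ₁ αinf : ℝ) (hΘ₁ : 0 < Θ₁) (hα : 0 < αinf)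
    (lam : Measure ℝ) [IsFiniteMeasure lam] (hne : lam ≠ 0)
    (hsupp : lam (Set.Icc 0 Θ₁)ᶜ = 0)
    (a : ℝ) (ha : 0 ≤ a)
    (σ : Measure ℝ) [IsFiniteMeasure σ] (hσsupp : σ (Set.Icc 0 Θ₁)ᶜ = 0)
    (hrep : ∀ s : ℝ, 0 < s →
      αinf / (s * ∫ Θ : ℝ, (1 + s * Θ)⁻¹ ∂lam) =
        a / s + ∫ Θ : ℝ, (1 + s * Θ)⁻¹ ∂σ) :
    a = αinf / (lam Set.univ).toReal := by
  set μ₀ := (lam Set.univ).toReal with hμ₀def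
  set σ₀ := (σ Set.univ).toReal with hσ₀def
  have hμ₀ : 0 < μ₀ := by
    apply ENNReal.toReal_pos
    · exact (Measure.measure_univ_pos.mpr hne).ne'
    · exact (measure_lt_top lam _).ne
  have hσ₀ : 0 ≤ σ₀ := ENNReal.toReal_nonneg
  have key : ∀ s : ℝ, 0 < s →
      αinf / μ₀ - s * σ₀ ≤ a ∧ a ≤ αinf / μ₀ + s * (αinf * Θ₁ / μ₀) := by
    intro s hs
    obtain ⟨hIint, hIlb, hIub⟩ := stmt12_aux Θ₁ s hΘ₁ hs lam hsupp
    obtain ⟨hJint, hJlb, hJub⟩ := stmt12_aux Θ₁ s hΘ₁ hs σ hσsupp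
    set I := ∫ Θ : ℝ, (1 + s * Θ)⁻¹ ∂lam with hIdef
    set J := ∫ Θ : ℝ, (1 + s * Θ)⁻¹ ∂σ with hJdef
    have hden : (0:ℝ) < 1 + s * Θ₁ := by nlinarith
    have hI0 : 0 < I :=
      lt_of_lt_of_le (by positivity) hIlb
    have hJ0 : 0 ≤ J := le_trans (by positivity) hJlb
    have h := hrep s hs
    have heq : a = αinf / I - s * J := by
      have e1 : s * (αinf / (s * I)) = αinf / I := by
        field_simp [hs.ne']
      have e2 : s * (a / s + J) = a + s * J := by
        field_simp [hs.ne']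
      have h' := congrArg (fun x => s * x) h
      rw [e1, e2] at h'
      linarith
    have h1 : αinf / μ₀ ≤ αinf / I :=
      div_le_div_of_nonneg_left hα.le hI0 hIub
    have h2 : αinf / I ≤ αinf / ((1 + s * Θ₁)⁻¹ * μ₀) :=
      div_le_div_of_nonneg_left hα.le (by positivity) hIlb
    have h3 : αinf / ((1 + s * Θ₁)⁻¹ * μ₀) = αinf / μ₀ + s * (αinf * Θ₁ / μ₀) := by
      field_simp
    have h4 : s * J ≤ s * σ₀ := mul_le_mul_of_nonneg_left hJub hs.le
    constructor
    · linarith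
    · nlinarith
  have hCpos : 0 ≤ αinf * Θ₁ / μ₀ := by positivity
  have hle : a ≤ αinf / μ₀ := by
    refine le_of_forall_pos_le_add fun ε hε => ?_
    set C := αinf * Θ₁ / μ₀ with hCdef
    have hs : 0 < ε / (C + 1) := by positivity
    have := (key _ hs).2
    have : ε / (C + 1) * C ≤ ε := by
      rw [div_mul_eq_mul_div, div_le_iff₀ (by positivity)]
      nlinarith
    linarith [(key _ hs).2]
  have hge : αinf / μ₀ ≤ a := by
    refine le_of_forall_pos_le_add fun ε hε => ?_
    have hs : 0 < ε / (σ₀ + 1) := by positivity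
    have h1 := (key _ hs).1
    have h2 : ε / (σ₀ + 1) * σ₀ ≤ ε := by
      rw [div_mul_eq_mul_div, div_le_iff₀ (by positivity)]
      nlinarith
    linarith
  linarith
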